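/- Let G be a finite group acting by ring automorphisms on a commutative ring A with |G| invertible in A, and let J₁, J₂ ⊆ A be G-invariant ideals. Then (J₁ + J₂) ∩ A^G = (J₁ ∩ A^G) + (J₂ ∩ A^G). -/
import Mathlib


/-- The subring of `G`-invariant elements of `A`. -/
def fixedSubring (G A : Type*) [Monoid G] [CommRing A] [MulSemiringAction G A] : Subring A where
  carrier := {a | ∀ g : G, g • a = a}
  mul_mem' := by intro a b ha hb g; rw [smul_mul', ha g, hb g]
  one_mem' := fun g => smul_one g
  add_mem' := by intro a b ha hb g; rw [smul_add, ha g, hb g]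
  zero_mem' := fun g => smul_zero g
  neg_mem' := by intro a ha g; rw [smul_neg, ha g]

section Reynolds

variable (G : Type*) {A : Type*} [Group G] [Fintype G] [CommRing A]
  [MulSemiringAction G A] [Invertible ((Fintype.card G : A))]

/-- Reynolds operator. -/
noncomputable def reynolds (a : A) : A :=
  ⅟(Fintype.card G : A) * ∑ g : G, g • a

lemma smul_invOf_card (h : G) : h • (⅟(Fintype.card G : A)) = ⅟(Fintype.card G : A) := by
  symm
  apply invOf_eq_right_inv
  have : h • ((Fintype.card G : A) * ⅟(Fintype.card G : A)) = (Fintype.card G : A) * (h • ⅟(Fintype.card G : A)) := by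
    rw [smul_mul']
    congr 1
    exact map_natCast (MulSemiringAction.toRingHom G A h) _
  calc (Fintype.card G : A) * (h • ⅟(Fintype.card G : A))
      = h • ((Fintype.card G : A) * ⅟(Fintype.card G : A)) := this.symm
    _ = 1 := by rw [mul_invOf_self, smul_one]

lemma reynolds_fixed (a : A) : reynolds G a ∈ fixedSubring G A := by
  intro h
  unfold reynolds
  rw [smul_mul', smul_invOf_card]
  congr 1
  rw [Finset.smul_sum]
  exact Fintype.sum_equiv (Equiv.mulLeft h) _ _ (fun g => (mul_smul h g a).symm)

lemma reynolds_add (a b : A) : reynolds G (a + b) = reynolds G a + reynolds G b := by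
  unfold reynolds
  rw [← mul_add, ← Finset.sum_add_distrib]
  simp [smul_add]

lemma reynolds_mem (J : Ideal A) (hJ : ∀ (g : G), ∀ a ∈ J, g • a ∈ J) (a : A) (ha : a ∈ J) :
    reynolds G a ∈ J :=
  J.mul_mem_left _ (Ideal.sum_mem J (fun g _ => hJ g a ha))

lemma reynolds_of_fixed (a : A) (ha : a ∈ fixedSubring G A) : reynolds G a = a := by
  unfold reynolds
  rw [Finset.sum_congr rfl (fun g _ => ha g), Finset.sum_const, Finset.card_univ,
    nsmul_eq_mul, ← mul_assoc, invOf_mul_self, one_mul]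

end Reynolds

/-- Nagata's fundamental lemma (ii): for `G`-invariant ideals `J₁, J₂ ⊆ A`,
`(J₁ + J₂) ∩ A^G = (J₁ ∩ A^G) + (J₂ ∩ A^G)`. -/
theorem contraction_add (G A : Type*) [Group G] [Fintype G] [CommRing A]
    [MulSemiringAction G A] [Invertible ((Fintype.card G : A))]
    (J₁ J₂ : Ideal A) (hJ₁ : ∀ (g : G), ∀ a ∈ J₁, g • a ∈ J₁)
    (hJ₂ : ∀ (g : G), ∀ a ∈ J₂, g • a ∈ J₂) :
    (J₁ ⊔ J₂).comap (fixedSubring G A).subtype =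
      J₁.comap (fixedSubring G A).subtype ⊔ J₂.comap (fixedSubring G A).subtype := by
  apply le_antisymm
  · intro x hx
    have hx' : (x : A) ∈ J₁ ⊔ J₂ := hx
    obtain ⟨a, ha, b, hb, hab⟩ := Submodule.mem_sup.mp hx'
    have ha' : reynolds G a ∈ fixedSubring G A := reynolds_fixed G a
    have hb' : reynolds G b ∈ fixedSubring G A := reynolds_fixed G b
    have hx2 : (x : A) = reynolds G a + reynolds G b := by
      rw [← reynolds_add, hab, reynolds_of_fixed G _ x.2]
    apply Submodule.mem_sup.mpr
    refine ⟨⟨reynolds G a, ha'⟩, ?_, ⟨reynolds G b, hb'⟩, ?_, ?_⟩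
    · exact reynolds_mem G J₁ hJ₁ a ha
    · exact reynolds_mem G J₂ hJ₂ b hb
    · exact Subtype.ext hx2.symm
  · apply sup_le <;> exact Ideal.comap_mono (by simp)
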